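/- Fix an integer m ≥ 2 and the increasing sequence Λ_{m·t + ℓ} = (t+1)² + (ℓ-1)/m (t ≥ 0, 1 ≤ ℓ ≤ m). Then for all j > n ≥ 1 one has Λ_j - Λ_n ≤ ((4m-1)/(m(2m+1)))·(j² - n²). -/

import Mathlib

lemma step_15 (m : ℕ) (hm : 2 ≤ m) (Λ : ℕ → ℝ)
    (hΛ : ∀ t l : ℕ, 1 ≤ l → l ≤ m →
      Λ (m * t + l) = ((t : ℝ) + 1) ^ 2 + ((l : ℝ) - 1) / m)
    (k : ℕ) (hk : 1 ≤ k) :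
    Λ (k + 1) - Λ k ≤ ((4 * (m : ℝ) - 1) / ((m : ℝ) * (2 * (m : ℝ) + 1))) *
      (2 * (k : ℝ) + 1) := by
  have hm0 : 0 < m := by omega
  have hM : (0 : ℝ) < m := by exact_mod_cast hm0
  have hM2 : (2 : ℝ) ≤ m := by exact_mod_cast hm
  have hd : (0 : ℝ) < (m : ℝ) * (2 * (m : ℝ) + 1) := by positivity
  obtain ⟨t, l, hl1, hlm, hk'⟩ : ∃ t l, 1 ≤ l ∧ l ≤ m ∧ k = m * t + l :=
    ⟨(k - 1) / m, (k - 1) % m + 1, by omega,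
      by have := Nat.mod_lt (k - 1) hm0; omega,
      by have := Nat.div_add_mod (k - 1) m; omega⟩
  have hΛk : Λ k = ((t : ℝ) + 1) ^ 2 + ((l : ℝ) - 1) / m := by
    rw [hk']; exact hΛ t l hl1 hlm
  rcases eq_or_lt_of_le hlm with heq | hlt
  · -- l = m : block crossing
    have hk1 : k + 1 = m * (t + 1) + 1 := by
      have h : m * (t + 1) = m * t + m := by ring
      omega
    have hΛk1 : Λ (k + 1) = ((t : ℝ) + 1 + 1) ^ 2 + ((1 : ℝ) - 1) / m := by
      rw [hk1]
      have := hΛ (t + 1) 1 le_rfl (by omega)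
      push_cast at this
      push_cast
      linarith [this]
    have hkR : (k : ℝ) = (m : ℝ) * ((t : ℝ) + 1) := by
      have : k = m * t + m := by omega
      rw [this]; push_cast; ring
    have hlR : (l : ℝ) = m := by exact_mod_cast congrArg (Nat.cast : ℕ → ℝ) heq
    have hL : Λ (k + 1) - Λ k = (2 * (m : ℝ) * t + 2 * m + 1) / m := by
      rw [hΛk1, hΛk, hlR]
      field_simp
      ring
    rw [hL, hkR, div_mul_eq_mul_div, div_le_div_iff₀ hM hd]
    have ht0 : (0 : ℝ) ≤ t := Nat.cast_nonneg t
    nlinarith [mul_nonneg (mul_nonneg ht0 hM.le) hM.le, mul_nonneg ht0 hM.le,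
      mul_nonneg hM.le hM.le]
  · -- l < m : within a block
    have hk1 : k + 1 = m * t + (l + 1) := by omega
    have hΛk1 : Λ (k + 1) = ((t : ℝ) + 1) ^ 2 + (((l : ℝ) + 1) - 1) / m := by
      rw [hk1]
      have := hΛ t (l + 1) (by omega) (by omega)
      push_cast at this
      linarith [this]
    have hL : Λ (k + 1) - Λ k = 1 / m := by
      rw [hΛk1, hΛk]
      field_simp
      ring
    have hkR : (1 : ℝ) ≤ k := by exact_mod_cast hk
    rw [hL, div_mul_eq_mul_div, div_le_div_iff₀ hM hd]
    nlinarith [mul_nonneg (sub_nonneg.mpr hkR) (mul_nonneg hM.le hM.le),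
      mul_nonneg (sub_nonneg.mpr hkR) hM.le]

theorem stmt_15 (m : ℕ) (hm : 2 ≤ m) (Λ : ℕ → ℝ)
    (hΛ : ∀ t l : ℕ, 1 ≤ l → l ≤ m →
      Λ (m * t + l) = ((t : ℝ) + 1) ^ 2 + ((l : ℝ) - 1) / m) :
    ∀ j n : ℕ, 1 ≤ n → n < j →
      Λ j - Λ n ≤ ((4 * (m : ℝ) - 1) / ((m : ℝ) * (2 * (m : ℝ) + 1))) *
        ((j : ℝ) ^ 2 - (n : ℝ) ^ 2) := by
  intro j n hn hnj
  set C : ℝ := (4 * (m : ℝ) - 1) / ((m : ℝ) * (2 * (m : ℝ) + 1)) with hC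
  induction j, hnj using Nat.le_induction with
  | base =>
      calc Λ (n + 1) - Λ n ≤ C * (2 * (n : ℝ) + 1) := step_15 m hm Λ hΛ n hn
        _ = C * (((n : ℕ) + 1 : ℕ) ^ 2 - (n : ℝ) ^ 2) := by push_cast; ring
  | succ j hj ih =>
      have h1 : Λ (j + 1) - Λ j ≤ C * (2 * (j : ℝ) + 1) :=
        step_15 m hm Λ hΛ j (by omega)
      have h2 : C * (((j : ℕ) + 1 : ℕ) ^ 2 - (n : ℝ) ^ 2)
          = C * ((j : ℝ) ^ 2 - (n : ℝ) ^ 2) + C * (2 * (j : ℝ) + 1) := by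
        push_cast; ring
      rw [h2]
      linarith [ih]
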